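/- Let p ≥ 1 and let g : [x_0,x_N] → ℝ be 2p-times continuously differentiable. Then there exists a constant C > 0, depending only on g, p, x_0 and x_N, with the following property: for every integer N ≥ 2, taking the uniform partition x_n = x_0 + n(x_N − x_0)/N and the data y_{n,2k} = g^{(2k)}(x_n) (0 ≤ n ≤ N, 0 ≤ k ≤ p), every scaling vector α with max_n |α_n| < N^{−2p}, and every continuous function ℓ_α on [x_0,x_N] satisfying ℓ_α(L_n(x)) = α_n ℓ_α(x) + q_n(α_n, x) for all x ∈ [x_0,x_N] and 1 ≤ n ≤ N, one has sup_{x ∈ [x_0,x_N]} |g(x) − ℓ_α(x)| ≤ C · N^{−2p}. -/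

import Mathlib

open Set

set_option maxHeartbeats 1000000



/-- iterated derivWithin composition. -/
lemma iDW_iDW {f : ℝ → ℝ} {s : Set ℝ} (hs : UniqueDiffOn ℝ s) (k : ℕ) :
    ∀ m, ∀ t ∈ s, iteratedDerivWithin m (iteratedDerivWithin k f s) s t
      = iteratedDerivWithin (k + m) f s t := by
  intro m
  induction m with
  | zero => intro t ht; simp
  | succ m ih =>
    intro t ht
    have h1 : k + (m + 1) = (k + m) + 1 := by omega
    rw [iteratedDerivWithin_succ, h1, iteratedDerivWithin_succ,
      derivWithin_congr (fun y hy => ih y hy) (ih t ht)]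

lemma iteratedDeriv_polyeval (P : Polynomial ℝ) :
    ∀ k, iteratedDeriv k (fun t => P.eval t)
      = fun t => (Polynomial.derivative^[k] P).eval t := by
  intro k
  induction k generalizing P with
  | zero => simp
  | succ k ih =>
    rw [iteratedDeriv_succ']
    have : deriv (fun t => P.eval t) = fun t => (Polynomial.derivative P).eval t := by
      funext t; exact Polynomial.deriv (p := P)
    rw [this, ih, Function.iterate_succ_apply]

lemma natDegree_iterate_deriv (P : Polynomial ℝ) (k : ℕ) :
    (Polynomial.derivative^[k] P).natDegree ≤ P.natDegree - k := by
  induction k with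
  | zero => simp
  | succ k ih =>
    rw [Function.iterate_succ_apply']
    calc (Polynomial.derivative (Polynomial.derivative^[k] P)).natDegree
        ≤ (Polynomial.derivative^[k] P).natDegree - 1 := Polynomial.natDegree_derivative_le _
      _ ≤ P.natDegree - k - 1 := by omega
      _ = P.natDegree - (k+1) := by omega

lemma affine_abs_bound {a b : ℝ} (c0 c1 t : ℝ) (ht : t ∈ Icc a b) :
    |c1 * t + c0| ≤ max |c1 * a + c0| |c1 * b + c0| := by
  rcases le_total 0 c1 with h | h
  · exact abs_le_max_abs_abs (by nlinarith [ht.1, ht.2]) (by nlinarith [ht.1, ht.2])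
  · rw [max_comm]
    exact abs_le_max_abs_abs (by nlinarith [ht.1, ht.2]) (by nlinarith [ht.1, ht.2])

/-- If `v` is twice differentiable on `[a,b]`, vanishes at the endpoints, and its second
derivative (within `[a,b]`) is at most `M ≥ 0`, then `v ≥ -(b-a)^2 M`. -/
lemma lower_bound_of_deriv2_le {a b : ℝ} (hab : a < b) {v : ℝ → ℝ} {M : ℝ} (hM0 : 0 ≤ M)
    (hv0 : ContinuousOn v (Icc a b))
    (hv1 : DifferentiableOn ℝ v (Icc a b))
    (hv2 : DifferentiableOn ℝ (derivWithin v (Icc a b)) (Icc a b))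
    (hva : v a = 0) (hvb : v b = 0)
    (hM : ∀ t ∈ Icc a b, iteratedDerivWithin 2 v (Icc a b) t ≤ M) :
    ∀ t ∈ Icc a b, -((b - a) ^ 2 * M) ≤ v t := by
  have hD : UniqueDiffOn ℝ (Icc a b) := uniqueDiffOn_Icc hab
  set D := Icc a b with hDdef
  have hIoo : interior D = Ioo a b := interior_Icc
  set ψ : ℝ → ℝ := fun t => v t + M / 2 * ((t - a) * (b - t)) with hψ
  have hconc : ConcaveOn ℝ D ψ := by
    apply concaveOn_of_hasDerivWithinAt2_nonpos (f' := fun t => derivWithin v D t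
        + M / 2 * ((b - t) - (t - a)))
      (f'' := fun t => iteratedDerivWithin 2 v D t - M)
      (convex_Icc a b)
    · exact hv0.add (Continuous.continuousOn (by continuity))
    · intro t ht
      rw [hIoo] at ht
      have htD : t ∈ D := Ioo_subset_Icc_self ht
      have h1 : HasDerivWithinAt v (derivWithin v D t) (interior D) t :=
        ((hv1 t htD).hasDerivWithinAt).mono interior_subset
      have h2 : HasDerivWithinAt (fun t => M / 2 * ((t - a) * (b - t)))
          (M / 2 * (1 * (b - t) + (t - a) * (0 - 1))) (interior D) t :=
        HasDerivAt.hasDerivWithinAt ((((hasDerivAt_id t).sub_const a).mul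
            ((hasDerivAt_const t b).sub (hasDerivAt_id t))).const_mul (M / 2))
      have := h1.fun_add h2
      exact this.congr_deriv (by ring)
    · intro t ht
      rw [hIoo] at ht
      have htD : t ∈ D := Ioo_subset_Icc_self ht
      have h1 : HasDerivWithinAt (derivWithin v D)
          (derivWithin (derivWithin v D) D t) (interior D) t :=
        ((hv2 t htD).hasDerivWithinAt).mono interior_subset
      have h2 : HasDerivWithinAt (fun t => M / 2 * ((b - t) - (t - a)))
          (M / 2 * ((0 - 1) - (1 - 0))) (interior D) t :=
        HasDerivAt.hasDerivWithinAt ((((hasDerivAt_const t b).sub (hasDerivAt_id t)).sub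
          ((hasDerivAt_id t).sub (hasDerivAt_const t a))).const_mul (M / 2))
      have heq : derivWithin (derivWithin v D) D t = iteratedDerivWithin 2 v D t := by
        rw [iteratedDerivWithin_succ]
        exact (derivWithin_congr (fun y hy => (congrFun iteratedDerivWithin_one y))
          (congrFun iteratedDerivWithin_one t)).symm
      have := h1.fun_add h2
      rw [heq] at this
      exact this.congr_deriv (by ring)
    · intro t ht
      rw [hIoo] at ht
      have := hM t (Ioo_subset_Icc_self ht)
      linarith
  intro t ht
  have hba : (0:ℝ) < b - a := by linarith
  have hσ0 : (0:ℝ) ≤ (b - t) / (b - a) := div_nonneg (by linarith [ht.2]) hba.le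
  have hτ0 : (0:ℝ) ≤ (t - a) / (b - a) := div_nonneg (by linarith [ht.1]) hba.le
  have hστ : (b - t) / (b - a) + (t - a) / (b - a) = 1 := by field_simp; ring
  have key := hconc.2 (left_mem_Icc.mpr hab.le) (right_mem_Icc.mpr hab.le) hσ0 hτ0 hστ
  have hcomb : ((b - t) / (b - a)) • a + ((t - a) / (b - a)) • b = t := by
    simp only [smul_eq_mul]; field_simp; ring
  have hψa : ψ a = 0 := by simp [hψ, hva]
  have hψb : ψ b = 0 := by simp [hψ, hvb]
  rw [hcomb, hψa, hψb] at key
  have h0 : (0:ℝ) ≤ ψ t := by simpa using key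
  have e0 : (0:ℝ) ≤ (t - a) * (b - t) :=
    mul_nonneg (by linarith [ht.1]) (by linarith [ht.2])
  have e1 : (t - a) * (b - t) ≤ (b - a) * (b - a) :=
    mul_le_mul (by linarith [ht.2]) (by linarith [ht.1]) (by linarith [ht.2]) (by linarith)
  have hquad : M / 2 * ((t - a) * (b - t)) ≤ (b - a) ^ 2 * M := by nlinarith [e0, e1, hM0]
  simp only [hψ] at h0
  linarith

lemma abs_bound_of_deriv2 {a b : ℝ} (hab : a < b) {v : ℝ → ℝ} {M : ℝ}
    (hv0 : ContinuousOn v (Icc a b))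
    (hv1 : DifferentiableOn ℝ v (Icc a b))
    (hv2 : DifferentiableOn ℝ (derivWithin v (Icc a b)) (Icc a b))
    (hva : v a = 0) (hvb : v b = 0)
    (hM : ∀ t ∈ Icc a b, |iteratedDerivWithin 2 v (Icc a b) t| ≤ M) :
    ∀ t ∈ Icc a b, |v t| ≤ (b - a) ^ 2 * M := by
  have hD : UniqueDiffOn ℝ (Icc a b) := uniqueDiffOn_Icc hab
  have haD : a ∈ Icc a b := left_mem_Icc.mpr hab.le
  have hM0 : 0 ≤ M := le_trans (abs_nonneg _) (hM a haD)
  have hEqderiv : EqOn (derivWithin (fun t => -v t) (Icc a b)) (fun t => -derivWithin v (Icc a b) t)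
      (Icc a b) := fun y hy => derivWithin.fun_neg
  have hneg2 : ∀ t ∈ Icc a b, iteratedDerivWithin 2 (fun t => -v t) (Icc a b) t
      = -iteratedDerivWithin 2 v (Icc a b) t := by
    intro t ht
    rw [iteratedDerivWithin_succ, iteratedDerivWithin_succ (f := v)]
    have e1 : EqOn (iteratedDerivWithin 1 (fun t => -v t) (Icc a b))
        (fun y => -iteratedDerivWithin 1 v (Icc a b) y) (Icc a b) := by
      intro y hy
      simp only
      rw [iteratedDerivWithin_one, iteratedDerivWithin_one]
      exact derivWithin.fun_neg
    rw [derivWithin_congr e1 (e1 ht)]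
    rw [derivWithin.fun_neg]
  have hlow := lower_bound_of_deriv2_le hab hM0 hv0 hv1 hv2 hva hvb
    (fun t ht => (abs_le.mp (hM t ht)).2)
  have hup := lower_bound_of_deriv2_le hab hM0 (hv0.neg) (hv1.neg)
    (DifferentiableOn.congr (hv2.neg) hEqderiv)
    (by simp [hva]) (by simp [hvb])
    (fun t ht => by show iteratedDerivWithin 2 (fun t => -v t) (Icc a b) t ≤ M; rw [hneg2 t ht]; linarith [(abs_le.mp (hM t ht)).1])
  intro t ht
  have := hup t ht
  simp only [Pi.neg_apply] at this
  exact abs_le.mpr ⟨hlow t ht, by linarith⟩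

lemma iDW_comp_affine {a b : ℝ} (hab : a < b) {g : ℝ → ℝ} {m : ℕ}
    (hg : ContDiffOn ℝ m g (Icc a b)) {c d : ℝ}
    (hmap : ∀ t ∈ Icc a b, c * t + d ∈ Icc a b) :
    ∀ k ≤ m, ∀ t ∈ Icc a b,
      iteratedDerivWithin k (fun s => g (c * s + d)) (Icc a b) t
        = c ^ k * iteratedDerivWithin k g (Icc a b) (c * t + d) := by
  have hD : UniqueDiffOn ℝ (Icc a b) := uniqueDiffOn_Icc hab
  intro k
  induction k with
  | zero => intro _ t ht; simp
  | succ k ih =>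
    intro hk t ht
    have hk' : k ≤ m := by omega
    rw [iteratedDerivWithin_succ]
    rw [derivWithin_congr (fun y hy => ih hk' y hy) (ih hk' t ht)]
    have hGdiff : DifferentiableOn ℝ (iteratedDerivWithin k g (Icc a b)) (Icc a b) :=
      hg.differentiableOn_iteratedDerivWithin (by exact_mod_cast (by omega : k < m)) hD
    have hLt : c * t + d ∈ Icc a b := hmap t ht
    have hG : HasDerivWithinAt (iteratedDerivWithin k g (Icc a b))
        (derivWithin (iteratedDerivWithin k g (Icc a b)) (Icc a b) (c * t + d))
        (Icc a b) (c * t + d) := (hGdiff _ hLt).hasDerivWithinAt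
    have hL : HasDerivWithinAt (fun s => c * s + d) c (Icc a b) t :=
      (((hasDerivAt_id t).const_mul c).add_const d).hasDerivWithinAt.congr_deriv (by ring)
    have hcomp : HasDerivWithinAt
        (fun s => iteratedDerivWithin k g (Icc a b) (c * s + d))
        (derivWithin (iteratedDerivWithin k g (Icc a b)) (Icc a b) (c * t + d) * c)
        (Icc a b) t := by have := HasDerivWithinAt.comp t hG hL (fun y hy => hmap y hy); exact this
    have hfull : HasDerivWithinAt
        (fun s => c ^ k * iteratedDerivWithin k g (Icc a b) (c * s + d))
        (c ^ k * (derivWithin (iteratedDerivWithin k g (Icc a b)) (Icc a b) (c * t + d) * c))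
        (Icc a b) t := hcomp.const_mul _
    rw [hfull.derivWithin (hD t ht), iteratedDerivWithin_succ]
    ring

lemma iDW_combo {a b : ℝ} (hab : a < b) {F G : ℝ → ℝ} {α : ℝ} {P : Polynomial ℝ} {m : ℕ}
    (hF : ContDiffOn ℝ m F (Icc a b)) (hG : ContDiffOn ℝ m G (Icc a b)) :
    ∀ k ≤ m, ∀ t ∈ Icc a b,
      iteratedDerivWithin k (fun s => F s - α * G s - P.eval s) (Icc a b) t
        = iteratedDerivWithin k F (Icc a b) t - α * iteratedDerivWithin k G (Icc a b) t
          - (Polynomial.derivative^[k] P).eval t := by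
  have hD : UniqueDiffOn ℝ (Icc a b) := uniqueDiffOn_Icc hab
  intro k
  induction k with
  | zero => intro _ t ht; simp
  | succ k ih =>
    intro hk t ht
    have hk' : k ≤ m := by omega
    rw [iteratedDerivWithin_succ]
    rw [derivWithin_congr (fun y hy => ih hk' y hy) (ih hk' t ht)]
    have hFd : DifferentiableOn ℝ (iteratedDerivWithin k F (Icc a b)) (Icc a b) :=
      hF.differentiableOn_iteratedDerivWithin (by exact_mod_cast (by omega : k < m)) hD
    have hGd : DifferentiableOn ℝ (iteratedDerivWithin k G (Icc a b)) (Icc a b) :=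
      hG.differentiableOn_iteratedDerivWithin (by exact_mod_cast (by omega : k < m)) hD
    have hFh : HasDerivWithinAt (iteratedDerivWithin k F (Icc a b))
        (derivWithin (iteratedDerivWithin k F (Icc a b)) (Icc a b) t) (Icc a b) t :=
      (hFd t ht).hasDerivWithinAt
    have hGh : HasDerivWithinAt (fun s => α * iteratedDerivWithin k G (Icc a b) s)
        (α * derivWithin (iteratedDerivWithin k G (Icc a b)) (Icc a b) t) (Icc a b) t :=
      ((hGd t ht).hasDerivWithinAt).const_mul _
    have hPh : HasDerivWithinAt (fun s => (Polynomial.derivative^[k] P).eval s)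
        ((Polynomial.derivative^[k+1] P).eval t) (Icc a b) t := by
      have := ((Polynomial.derivative^[k] P).hasDerivAt t).hasDerivWithinAt (s := Icc a b)
      rwa [Function.iterate_succ_apply']
    have hfull := (hFh.fun_sub hGh).fun_sub hPh
    rw [hfull.derivWithin (hD t ht), iteratedDerivWithin_succ,
      iteratedDerivWithin_succ]

lemma contDiff_polyeval {n : ℕ∞} (P : Polynomial ℝ) :
    ContDiff ℝ n fun t : ℝ => P.eval t := by
  induction P using Polynomial.induction_on' with
  | add p q hp hq => simpa [Polynomial.eval_add] using hp.add hq
  | monomial k c =>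
    simpa [Polynomial.eval_monomial] using (contDiff_const (c := c)).mul (contDiff_id.pow k)


/-- Convergence of the Lidstone FIF to the data generating function: if
`g` is `2p`-times continuously differentiable on `[a, b]`, then there is a
constant `C > 0` such that for every `N ≥ 2`, every admissible scaling vector
with `|α n| < N^(-2p)` and the uniform partition `x n = a + n (b - a)/N`,
any Lidstone FIF `ℓ_α` for the data `y n k = g^(2k) (x n)` satisfies
`‖g - ℓ_α‖_∞ ≤ C · N^(-2p)`. -/
theorem lidstone_FIF_convergence
    (p : ℕ) (hp : 1 ≤ p) (a b : ℝ) (hab : a < b)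
    (g : ℝ → ℝ) (hg : ContDiffOn ℝ (2 * p) g (Set.Icc a b)) :
    ∃ C : ℝ, 0 < C ∧
      ∀ (N : ℕ), 2 ≤ N →
      ∀ x : ℕ → ℝ, (∀ n, x n = a + n * (b - a) / N) →
      ∀ L : ℕ → ℝ → ℝ,
        (∀ n t, L n t = ((x n - x (n - 1)) / (x N - x 0)) * t +
          (x N * x (n - 1) - x 0 * x n) / (x N - x 0)) →
      ∀ α : ℕ → ℝ, (∀ n, 1 ≤ n → n ≤ N → |α n| < ((N : ℝ) ^ (2 * p))⁻¹) →
      ∀ q : ℕ → ℝ → ℝ,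
        (∀ n, 1 ≤ n → n ≤ N →
          (∃ P : Polynomial ℝ, P.natDegree ≤ 2 * p + 1 ∧ ∀ t, q n t = P.eval t) ∧
          ∀ l ≤ p,
            iteratedDeriv (2 * l) (q n) (x 0) =
              ((x n - x (n - 1)) / (x N - x 0)) ^ (2 * l) *
                iteratedDerivWithin (2 * l) g (Set.Icc a b) (x (n - 1)) -
              α n * iteratedDerivWithin (2 * l) g (Set.Icc a b) (x 0) ∧
            iteratedDeriv (2 * l) (q n) (x N) =
              ((x n - x (n - 1)) / (x N - x 0)) ^ (2 * l) *
                iteratedDerivWithin (2 * l) g (Set.Icc a b) (x n) -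
              α n * iteratedDerivWithin (2 * l) g (Set.Icc a b) (x N)) →
      ∀ ℓ : ℝ → ℝ,
        ContinuousOn ℓ (Set.Icc a b) →
        (∀ n, 1 ≤ n → n ≤ N → ∀ t ∈ Set.Icc a b, ℓ (L n t) = α n * ℓ t + q n t) →
        ∀ t ∈ Set.Icc a b, |g t - ℓ t| ≤ C * ((N : ℝ) ^ (2 * p))⁻¹ := by
  have hD : UniqueDiffOn ℝ (Icc a b) := uniqueDiffOn_Icc hab
  have hg2 : ContDiffOn ℝ ((2*p : ℕ) : ℕ∞) g (Set.Icc a b) := by exact_mod_cast hg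
  have hba : (0:ℝ) < b - a := by linarith
  have hbne : b - a ≠ 0 := ne_of_gt hba
  obtain ⟨M0, hM0⟩ := isCompact_Icc.exists_bound_of_continuousOn
    (hg2.continuousOn_iteratedDerivWithin le_rfl hD)
  have hM0' : ∀ t ∈ Icc a b, |iteratedDerivWithin (2*p) g (Icc a b) t| ≤ M0 := by
    intro t ht; simpa using hM0 t ht
  have hM0nn : 0 ≤ M0 :=
    le_trans (abs_nonneg _) (hM0' a (left_mem_Icc.mpr hab.le))
  set B : ℝ := ((b - a)^2)^p with hBdef
  have hB : 0 < B := by positivity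
  refine ⟨8 * M0 * B + 1, by positivity, ?_⟩
  intro N hN x hx L hL α hα q hq ℓ hℓc hℓe
  have hNpos : (0:ℝ) < N := by
    have : (0:ℕ) < N := by omega
    exact_mod_cast this
  have hNne : (N:ℝ) ≠ 0 := ne_of_gt hNpos
  set ε : ℝ := ((N : ℝ) ^ (2 * p))⁻¹ with hεdef
  have hεpos : 0 < ε := by positivity
  have h4 : (4:ℝ) ≤ (N:ℝ) ^ (2*p) := by
    calc (4:ℝ) = 2^2 := by norm_num
    _ ≤ (2:ℝ)^(2*p) := by
        apply pow_le_pow_right₀ (by norm_num)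
        omega
    _ ≤ (N:ℝ)^(2*p) := by
        apply pow_le_pow_left₀ (by norm_num)
        exact_mod_cast hN
  have hε4 : ε ≤ 1/4 := by
    rw [hεdef]
    rw [inv_le_comm₀ (by positivity) (by norm_num)]
    simpa using h4
  set cN : ℝ := (N:ℝ)⁻¹ with hcNdef
  have hcNpos : 0 < cN := by positivity
  have hcNpow : ∀ k : ℕ, cN ^ k = ((N:ℝ)^k)⁻¹ := fun k => by
    rw [hcNdef, inv_pow]
  have hx0 : x 0 = a := by rw [hx]; simp
  have hxN : x N = b := by rw [hx]; field_simp; ring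
  have hxa : ∀ k : ℕ, a ≤ x k := by
    intro k; rw [hx]
    have : 0 ≤ (k:ℝ) * (b - a) / N := by positivity
    linarith
  have hxb : ∀ k : ℕ, k ≤ N → x k ≤ b := by
    intro k hk; rw [hx]
    have hk' : (k:ℝ) ≤ N := by exact_mod_cast hk
    have : (k:ℝ) * (b - a) / N ≤ b - a := by
      rw [div_le_iff₀ hNpos]; nlinarith
    linarith
  have hxb' : ∀ k : ℕ, k ≤ N → (k:ℝ) * (b-a) / N ≤ b - a := by
    intro k hk
    have := hxb k hk; rw [hx] at this; linarith
  have hxmem : ∀ k : ℕ, k ≤ N → x k ∈ Icc a b := fun k hk => ⟨hxa k, hxb k hk⟩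
  have hstep : ∀ n : ℕ, 1 ≤ n → x n = x (n-1) + (b - a) * cN := by
    intro n hn
    rw [hx, hx, Nat.cast_sub hn, hcNdef]
    push_cast
    field_simp
    ring
  -- the key estimate, for each 1 ≤ n ≤ N
  have hkey : ∀ n, 1 ≤ n → n ≤ N → ∀ t ∈ Icc a b,
      |g (L n t) - α n * g t - q n t| ≤ 4 * M0 * B * ε := by
    intro n hn1 hnN
    obtain ⟨⟨P, hP1, hP2⟩, hqd⟩ := hq n hn1 hnN
    have hqfun : q n = fun t => P.eval t := funext hP2
    set dn : ℝ := x (n-1) - a * cN with hdndef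
    have hslope : (x n - x (n-1)) / (x N - x 0) = cN := by
      rw [hstep n hn1, hxN, hx0]
      field_simp
      ring
    have hLeq : ∀ t, L n t = cN * t + dn := by
      intro t
      rw [hL n t, hxN, hx0, hstep n hn1, hdndef]
      field_simp
      ring
    have hmap : ∀ t ∈ Icc a b, cN * t + dn ∈ Icc a b := by
      intro t ht
      have he : cN * t + dn = x (n-1) + (t - a) * cN := by rw [hdndef]; ring
      constructor
      · rw [he]
        have : 0 ≤ (t - a) * cN := mul_nonneg (by linarith [ht.1]) hcNpos.le
        linarith [hxa (n-1)]
      · rw [he]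
        have h1 : (t - a) * cN ≤ (b - a) * cN :=
          mul_le_mul_of_nonneg_right (by linarith [ht.2]) hcNpos.le
        have h2 : x (n-1) + (b-a) * cN = x n := (hstep n hn1).symm
        have h3 := hxb n hnN
        linarith
    have hLa : cN * a + dn = x (n-1) := by rw [hdndef]; ring
    have hLb : cN * b + dn = x n := by
      rw [hdndef, hstep n hn1]; ring
    have haffine : ContDiff ℝ (2*p : ℕ) (fun s : ℝ => cN * s + dn) :=
      (contDiff_const.mul contDiff_id).add contDiff_const
    have hF : ContDiffOn ℝ (2*p : ℕ) (fun s => g (cN * s + dn)) (Icc a b) :=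
      ContDiffOn.comp hg2 haffine.contDiffOn hmap
    set h : ℝ → ℝ := fun s => g (cN * s + dn) - α n * g s - P.eval s with hhdef
    have hh : ContDiffOn ℝ (2*p : ℕ) h (Icc a b) :=
      (hF.sub (contDiffOn_const.mul hg2)).sub (contDiff_polyeval P).contDiffOn
    -- derivative formula
    have hder : ∀ k ≤ 2*p, ∀ t ∈ Icc a b,
        iteratedDerivWithin k h (Icc a b) t
          = cN^k * iteratedDerivWithin k g (Icc a b) (cN * t + dn)
            - α n * iteratedDerivWithin k g (Icc a b) t
            - (Polynomial.derivative^[k] P).eval t := by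
      intro k hk t ht
      rw [hhdef]
      rw [iDW_combo hab hF hg2 k hk t ht]
      rw [iDW_comp_affine hab hg2 hmap k hk t ht]
    -- endpoint values of q-derivatives
    have hqa : ∀ l ≤ p, (Polynomial.derivative^[2*l] P).eval a
        = cN^(2*l) * iteratedDerivWithin (2*l) g (Icc a b) (x (n-1))
          - α n * iteratedDerivWithin (2*l) g (Icc a b) a := by
      intro l hl
      have := (hqd l hl).1
      rw [hqfun, iteratedDeriv_polyeval, hslope, hx0] at this
      exact this
    have hqb : ∀ l ≤ p, (Polynomial.derivative^[2*l] P).eval b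
        = cN^(2*l) * iteratedDerivWithin (2*l) g (Icc a b) (x n)
          - α n * iteratedDerivWithin (2*l) g (Icc a b) b := by
      intro l hl
      have := (hqd l hl).2
      rw [hqfun, iteratedDeriv_polyeval, hslope, hxN] at this
      exact this
    -- endpoint vanishing
    have hva : ∀ l ≤ p, iteratedDerivWithin (2*l) h (Icc a b) a = 0 := by
      intro l hl
      rw [hder (2*l) (by omega) a (left_mem_Icc.mpr hab.le), hLa, hqa l hl]
      ring
    have hvb : ∀ l ≤ p, iteratedDerivWithin (2*l) h (Icc a b) b = 0 := by
      intro l hl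
      rw [hder (2*l) (by omega) b (right_mem_Icc.mpr hab.le), hLb, hqb l hl]
      ring
    -- bound on the 2p-th derivative
    have hαn : |α n| ≤ ε := (hα n hn1 hnN).le
    have hQ : (Polynomial.derivative^[2*p] P).natDegree ≤ 1 := by
      have := natDegree_iterate_deriv P (2*p)
      omega
    have hQform := Polynomial.eq_X_add_C_of_natDegree_le_one hQ
    have hQbound : ∀ t ∈ Icc a b, |(Polynomial.derivative^[2*p] P).eval t| ≤ 2 * M0 * ε := by
      intro t ht
      set Q := Polynomial.derivative^[2*p] P with hQdef
      have hev : ∀ s : ℝ, Q.eval s = Q.coeff 1 * s + Q.coeff 0 := by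
        intro s
        conv_lhs => rw [hQform]
        simp
      have hboundpt : ∀ s ∈ Icc a b, s = a ∨ s = b → True := fun _ _ _ => trivial
      have hQa : |Q.eval a| ≤ 2 * M0 * ε := by
        rw [hqa p le_rfl]
        have h1 : |cN^(2*p) * iteratedDerivWithin (2*p) g (Icc a b) (x (n-1))| ≤ ε * M0 := by
          rw [abs_mul, hcNpow, abs_of_nonneg (by positivity)]
          exact mul_le_mul le_rfl (hM0' _ (hxmem (n-1) (by omega))) (abs_nonneg _) hεpos.le
        have h2 : |α n * iteratedDerivWithin (2*p) g (Icc a b) a| ≤ ε * M0 := by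
          rw [abs_mul]
          exact mul_le_mul hαn (hM0' _ (left_mem_Icc.mpr hab.le)) (abs_nonneg _) hεpos.le
        calc |_ - _| ≤ _ + _ := abs_sub _ _
        _ ≤ ε * M0 + ε * M0 := add_le_add h1 h2
        _ = 2 * M0 * ε := by ring
      have hQb2 : |Q.eval b| ≤ 2 * M0 * ε := by
        rw [hqb p le_rfl]
        have h1 : |cN^(2*p) * iteratedDerivWithin (2*p) g (Icc a b) (x n)| ≤ ε * M0 := by
          rw [abs_mul, hcNpow, abs_of_nonneg (by positivity)]
          exact mul_le_mul le_rfl (hM0' _ (hxmem n hnN)) (abs_nonneg _) hεpos.le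
        have h2 : |α n * iteratedDerivWithin (2*p) g (Icc a b) b| ≤ ε * M0 := by
          rw [abs_mul]
          exact mul_le_mul hαn (hM0' _ (right_mem_Icc.mpr hab.le)) (abs_nonneg _) hεpos.le
        calc |_ - _| ≤ _ + _ := abs_sub _ _
        _ ≤ ε * M0 + ε * M0 := add_le_add h1 h2
        _ = 2 * M0 * ε := by ring
      calc |Q.eval t| = |Q.coeff 1 * t + Q.coeff 0| := by rw [hev]
      _ ≤ max |Q.coeff 1 * a + Q.coeff 0| |Q.coeff 1 * b + Q.coeff 0| :=
          affine_abs_bound _ _ t ht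
      _ = max |Q.eval a| |Q.eval b| := by rw [hev a, hev b]
      _ ≤ 2 * M0 * ε := max_le hQa hQb2
    have hd2p : ∀ t ∈ Icc a b, |iteratedDerivWithin (2*p) h (Icc a b) t| ≤ 4 * M0 * ε := by
      intro t ht
      rw [hder (2*p) le_rfl t ht]
      have h1 : |cN^(2*p) * iteratedDerivWithin (2*p) g (Icc a b) (cN * t + dn)| ≤ ε * M0 := by
        rw [abs_mul, hcNpow, abs_of_nonneg (by positivity)]
        exact mul_le_mul le_rfl (hM0' _ (hmap t ht)) (abs_nonneg _) hεpos.le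
      have h2 : |α n * iteratedDerivWithin (2*p) g (Icc a b) t| ≤ ε * M0 := by
        rw [abs_mul]
        exact mul_le_mul hαn (hM0' _ ht) (abs_nonneg _) hεpos.le
      have h3 := hQbound t ht
      calc |_ - _ - _| ≤ |_ - _| + |_| := abs_sub _ _
      _ ≤ (ε * M0 + ε * M0) + 2 * M0 * ε := add_le_add (le_trans (abs_sub _ _) (add_le_add h1 h2)) h3
      _ = 4 * M0 * ε := by ring
    -- downward induction
    have hiter : ∀ j, j ≤ p → ∀ t ∈ Icc a b,
        |iteratedDerivWithin (2*(p-j)) h (Icc a b) t| ≤ ((b-a)^2)^j * (4 * M0 * ε) := by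
      intro j
      induction j with
      | zero =>
        intro _ t ht
        simpa using hd2p t ht
      | succ j ih =>
        intro hj t ht
        have hj' : j ≤ p := by omega
        set l : ℕ := p - (j+1) with hldef
        have hl1 : 2*(p-j) = 2*l + 2 := by omega
        have hl2 : 2*(p - (j+1)) = 2*l := by omega
        rw [hl2]
        set v : ℝ → ℝ := iteratedDerivWithin (2*l) h (Icc a b) with hvdef
        have hv0 : ContinuousOn v (Icc a b) :=
          hh.continuousOn_iteratedDerivWithin (by exact_mod_cast (by omega : 2*l ≤ 2*p)) hD
        have hv1 : DifferentiableOn ℝ v (Icc a b) :=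
          hh.differentiableOn_iteratedDerivWithin (by exact_mod_cast (by omega : 2*l < 2*p)) hD
        have hv2 : DifferentiableOn ℝ (derivWithin v (Icc a b)) (Icc a b) := by
          apply DifferentiableOn.congr
            (hh.differentiableOn_iteratedDerivWithin
              (by exact_mod_cast (by omega : 2*l+1 < 2*p)) hD)
          intro y hy
          rw [hvdef, ← iteratedDerivWithin_succ]
        have hMv : ∀ s ∈ Icc a b, |iteratedDerivWithin 2 v (Icc a b) s|
            ≤ ((b-a)^2)^j * (4 * M0 * ε) := by
          intro s hs
          rw [hvdef, iDW_iDW hD (2*l) 2 s hs]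
          have : 2*l + 2 = 2*(p-j) := by omega
          rw [this]
          exact ih hj' s hs
        have := abs_bound_of_deriv2 hab hv0 hv1 hv2
          (hva l (by omega)) (hvb l (by omega)) hMv t ht
        calc |v t| ≤ (b-a)^2 * (((b-a)^2)^j * (4 * M0 * ε)) := this
        _ = ((b-a)^2)^(j+1) * (4 * M0 * ε) := by ring
    have hfinal := hiter p le_rfl
    intro t ht
    have := hfinal t ht
    rw [Nat.sub_self, Nat.mul_zero, iteratedDerivWithin_zero] at this
    have heq : g (L n t) - α n * g t - q n t = h t := by
      rw [hhdef, hLeq t, hP2]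
    rw [heq]
    calc |h t| ≤ B * (4 * M0 * ε) := this
    _ = 4 * M0 * B * ε := by ring
  -- covering: every point of [a,b] is L n t for suitable n, t
  have hcover : ∀ s ∈ Icc a b, ∃ n t, 1 ≤ n ∧ n ≤ N ∧ t ∈ Icc a b ∧ L n t = s := by
    intro s hs
    set r : ℝ := (s - a) * N / (b - a) with hrdef
    have hr0 : 0 ≤ r := by
      apply div_nonneg (mul_nonneg (by linarith [hs.1]) hNpos.le) hba.le
    have hrN : r ≤ (N:ℝ) := by
      rw [hrdef, div_le_iff₀ hba]
      nlinarith [hs.2]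
    set n : ℕ := max 1 ⌈r⌉₊ with hndef
    have hn1 : 1 ≤ n := le_max_left _ _
    have hnN : n ≤ N := by
      apply max_le (by omega)
      exact Nat.ceil_le.mpr (by exact_mod_cast hrN)
    have hnr : r ≤ (n:ℝ) := le_trans (Nat.le_ceil r) (by exact_mod_cast le_max_right 1 ⌈r⌉₊)
    have hn1r : (n:ℝ) - 1 ≤ r := by
      rcases le_or_gt ⌈r⌉₊ 1 with hc | hc
      · have : n = 1 := by omega
        rw [this]; simpa using hr0
      · have : n = ⌈r⌉₊ := by omega
        rw [this]
        have := Nat.ceil_lt_add_one hr0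
        linarith
    -- x (n-1) ≤ s ≤ x n
    have hcast : ((n-1 : ℕ) : ℝ) = (n:ℝ) - 1 := by
      rw [Nat.cast_sub hn1]; simp
    have hxn1s : x (n-1) ≤ s := by
      rw [hx, hcast]
      rw [hrdef] at hn1r
      rw [le_div_iff₀ hba] at hn1r
      have : ((n:ℝ) - 1) * (b - a) / N ≤ s - a := by
        rw [div_le_iff₀ hNpos]
        nlinarith
      linarith
    have hsxn : s ≤ x n := by
      rw [hx]
      rw [hrdef] at hnr
      rw [div_le_iff₀ hba] at hnr
      have : s - a ≤ (n:ℝ) * (b - a) / N := by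
        rw [le_div_iff₀ hNpos]
        nlinarith
      linarith
    refine ⟨n, a + (s - x (n-1)) * N, hn1, hnN, ?_, ?_⟩
    · constructor
      · have h0 : 0 ≤ (s - x (n-1)) * N := mul_nonneg (by linarith) hNpos.le
        linarith
      · have h1 : (s - x (n-1)) * N ≤ b - a := by
          have h2 : s - x (n-1) ≤ (b-a) * cN := by
            have := hstep n hn1
            linarith [hsxn]
          have h3 : (s - x (n-1)) * N ≤ (b-a) * cN * N :=
            mul_le_mul_of_nonneg_right h2 hNpos.le
          have h4 : (b-a) * cN * N = b - a := by rw [hcNdef]; field_simp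
          linarith
        linarith
    · rw [hL n _, hxN, hx0, hstep n hn1]
      rw [hcNdef]
      field_simp
      ring
  -- maximum of the error
  have hgc : ContinuousOn g (Icc a b) := hg2.continuousOn
  have habs : ContinuousOn (fun t => |g t - ℓ t|) (Icc a b) := (hgc.sub hℓc).abs
  obtain ⟨ts, hts, htsmax⟩ := isCompact_Icc.exists_isMaxOn (nonempty_Icc.mpr hab.le) habs
  set M : ℝ := |g ts - ℓ ts| with hMdef
  have hMnn : 0 ≤ M := abs_nonneg _
  have hMmax : ∀ t ∈ Icc a b, |g t - ℓ t| ≤ M := fun t ht => htsmax ht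
  obtain ⟨n, t, hn1, hnN, htmem, hLt⟩ := hcover ts hts
  have hM2 : M ≤ (1/4) * M + 4 * M0 * B * ε := by
    have hsplit : g ts - ℓ ts = α n * (g t - ℓ t) + (g (L n t) - α n * g t - q n t) := by
      rw [← hLt, hℓe n hn1 hnN t htmem]
      ring
    have h1 : |α n * (g t - ℓ t)| ≤ (1/4) * M := by
      rw [abs_mul]
      calc |α n| * |g t - ℓ t| ≤ ε * M :=
        mul_le_mul (hα n hn1 hnN).le (hMmax t htmem) (abs_nonneg _) hεpos.le
      _ ≤ (1/4) * M := mul_le_mul_of_nonneg_right hε4 hMnn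
    calc M = |g ts - ℓ ts| := hMdef
    _ = |α n * (g t - ℓ t) + (g (L n t) - α n * g t - q n t)| := by rw [hsplit]
    _ ≤ |α n * (g t - ℓ t)| + |g (L n t) - α n * g t - q n t| := abs_add_le _ _
    _ ≤ (1/4) * M + 4 * M0 * B * ε := add_le_add h1 (hkey n hn1 hnN t htmem)
  have hMfin : M ≤ 8 * M0 * B * ε := by linarith
  intro t ht
  calc |g t - ℓ t| ≤ M := hMmax t ht
  _ ≤ 8 * M0 * B * ε := hMfin
  _ ≤ (8 * M0 * B + 1) * ε := by nlinarith
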